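/- Let D₁ and D₂ be two strictly convex compact domains in ℝ² with smooth boundaries, touching at a common boundary point p with the same inward normal there. If for each direction of the inward-pointing normal ν ∈ S¹ the curvature of ∂D₁ at the boundary point with normal ν is at most the curvature of ∂D₂ at its boundary point with normal ν, then D₂ ⊆ D₁. -/

import Mathlib

open Real

/-- The strictly convex compact planar domain with (smooth, `2π`-periodic) support function
`h : ℝ → ℝ`, the angle `θ` parametrising the unit (outward) normal `(cos θ, sin θ)`. -/
def supportDomain (h : ℝ → ℝ) : Set (ℝ × ℝ) :=
  {y : ℝ × ℝ | ∀ θ : ℝ, y.1 * Real.cos θ + y.2 * Real.sin θ ≤ h θ}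

/-- The boundary point of `supportDomain h` with (outward) normal direction `θ`; the Gauss map
`∂D → S¹` is inverse to `θ ↦ boundaryPoint h θ`. -/
noncomputable def boundaryPoint (h : ℝ → ℝ) (θ : ℝ) : ℝ × ℝ :=
  (h θ * Real.cos θ - deriv h θ * Real.sin θ,
   h θ * Real.sin θ + deriv h θ * Real.cos θ)

/-- Sturm-type comparison: a `2π`-periodic `C²` function with `g(θ₀) = g'(θ₀) = 0`
and `g + g'' ≥ 0` is nonnegative everywhere. -/
lemma key_nonneg (g : ℝ → ℝ) (hg : ContDiff ℝ 2 g) (hper : Function.Periodic g (2 * π))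
    (θ₀ : ℝ) (h0 : g θ₀ = 0) (h0' : deriv g θ₀ = 0)
    (hpos : ∀ θ, 0 ≤ g θ + deriv (deriv g) θ) : ∀ θ, 0 ≤ g θ := by
  have hg' : Differentiable ℝ g := hg.differentiable (by norm_num)
  have hgd : Differentiable ℝ (deriv g) := by
    have := (contDiff_succ_iff_deriv (n := 1)).mp (by exact_mod_cast hg)
    exact this.2.2.differentiable (by norm_num)
  -- the auxiliary function and its derivative
  set A : ℝ → ℝ → ℝ := fun s t => deriv g t * Real.sin (s - t) + g t * Real.cos (s - t) with hA
  have hAderiv : ∀ s t : ℝ, HasDerivAt (A s)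
      ((g t + deriv (deriv g) t) * Real.sin (s - t)) t := by
    intro s t
    have h1 : HasDerivAt (fun t => Real.sin (s - t)) (-Real.cos (s - t)) t := by
      exact ((Real.hasDerivAt_sin (s - t)).comp t ((hasDerivAt_id t).const_sub s)).congr_deriv (by ring)
    have h2 : HasDerivAt (fun t => Real.cos (s - t)) (Real.sin (s - t)) t := by
      exact ((Real.hasDerivAt_cos (s - t)).comp t ((hasDerivAt_id t).const_sub s)).congr_deriv (by ring)
    have h3 : HasDerivAt (deriv g) (deriv (deriv g) t) t := (hgd t).hasDerivAt
    have h4 : HasDerivAt g (deriv g t) t := (hg' t).hasDerivAt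
    have := ((h3.mul h1).add (h4.mul h2))
    exact this.congr_deriv (by ring)
  have hAdiff : ∀ s, Differentiable ℝ (A s) := fun s t => ((hAderiv s t).differentiableAt)
  have hAd : ∀ s t, deriv (A s) t = (g t + deriv (deriv g) t) * Real.sin (s - t) :=
    fun s t => (hAderiv s t).deriv
  have hA0 : ∀ s, A s θ₀ = 0 := by intro s; simp [hA, h0, h0']
  have hAs : ∀ s, A s s = g s := by intro s; simp [hA]
  -- nonnegativity on [θ₀, θ₀ + π]
  have right : ∀ s ∈ Set.Icc θ₀ (θ₀ + π), 0 ≤ g s := by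
    intro s hs
    have mono : MonotoneOn (A s) (Set.Icc θ₀ s) := by
      apply monotoneOn_of_deriv_nonneg (convex_Icc _ _)
        (hAdiff s).continuous.continuousOn ((hAdiff s).differentiableOn)
      intro t ht
      rw [interior_Icc] at ht
      rw [hAd]
      have hsin : 0 ≤ Real.sin (s - t) := by
        apply Real.sin_nonneg_of_nonneg_of_le_pi <;>
          [linarith [ht.2]; linarith [ht.1, hs.1, hs.2]]
      exact mul_nonneg (hpos t) hsin
    have := mono (Set.left_mem_Icc.mpr hs.1) (Set.right_mem_Icc.mpr hs.1) hs.1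
    rw [hA0, hAs] at this
    exact this
  -- nonnegativity on [θ₀ - π, θ₀]
  have left : ∀ s ∈ Set.Icc (θ₀ - π) θ₀, 0 ≤ g s := by
    intro s hs
    have anti : AntitoneOn (A s) (Set.Icc s θ₀) := by
      apply antitoneOn_of_deriv_nonpos (convex_Icc _ _)
        (hAdiff s).continuous.continuousOn ((hAdiff s).differentiableOn)
      intro t ht
      rw [interior_Icc] at ht
      rw [hAd]
      have hsin : Real.sin (s - t) ≤ 0 := by
        apply Real.sin_nonpos_of_nonpos_of_neg_pi_le <;>
          [linarith [ht.1]; linarith [ht.2, hs.1, hs.2]]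
      exact mul_nonpos_of_nonneg_of_nonpos (hpos t) hsin
    have := anti (Set.left_mem_Icc.mpr hs.2) (Set.right_mem_Icc.mpr hs.2) hs.2
    rw [hA0, hAs] at this
    exact this
  -- conclude by periodicity
  intro θ
  have hπ : (0:ℝ) < 2 * π := by positivity
  set n : ℤ := round ((θ - θ₀) / (2 * π)) with hn
  have hb : |(θ - θ₀) / (2 * π) - n| ≤ 1 / 2 := abs_sub_round _
  have hd : |θ - n * (2 * π) - θ₀| ≤ π := by
    have heq : ((θ - θ₀) / (2 * π) - n) * (2 * π) = θ - n * (2 * π) - θ₀ := by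
      field_simp; ring
    calc |θ - n * (2 * π) - θ₀| = |(θ - θ₀) / (2 * π) - n| * |2 * π| := by
          rw [← abs_mul, heq]
      _ ≤ (1 / 2) * (2 * π) := by
          rw [abs_of_pos hπ]; exact mul_le_mul_of_nonneg_right hb hπ.le
      _ = π := by ring
  have hmem : θ - n * (2 * π) ∈ Set.Icc (θ₀ - π) (θ₀ + π) := by
    rw [abs_le] at hd
    constructor <;> [linarith [hd.1]; linarith [hd.2]]
  have hval : g (θ - n * (2 * π)) = g θ := hper.sub_int_mul_eq n
  rcases le_total (θ - n * (2 * π)) θ₀ with h | h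
  · have := left _ ⟨hmem.1, h⟩; linarith [hval ▸ this]
  · have := right _ ⟨h, hmem.2⟩; linarith [hval ▸ this]

/-- **Blaschke's inclusion theorem.** Let `D₁, D₂ ⊆ ℝ²` be strictly convex compact domains with
smooth boundaries, given by smooth `2π`-periodic support functions `h₁, h₂` (strict convexity:
the radius of curvature `h + h'' > 0`). The curvature of `∂Dᵢ` at the boundary point with
normal angle `θ` is `κᵢ(θ) = 1/(hᵢ(θ) + hᵢ''(θ))`; the comparison `κ₁ ≤ κ₂` (as functions of
the normal) reads `h₂ + h₂'' ≤ h₁ + h₁''`. If `D₁` and `D₂` touch at a common boundary point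
`p` with the same normal there, then `D₂ ⊆ D₁`. -/
theorem blaschke_inclusion
    (h₁ h₂ : ℝ → ℝ)
    (hsm₁ : ContDiff ℝ 2 h₁) (hsm₂ : ContDiff ℝ 2 h₂)
    (hper₁ : Function.Periodic h₁ (2 * π)) (hper₂ : Function.Periodic h₂ (2 * π))
    (hconv₁ : ∀ θ, 0 < h₁ θ + deriv (deriv h₁) θ)
    (hconv₂ : ∀ θ, 0 < h₂ θ + deriv (deriv h₂) θ)
    -- curvature comparison κ₁(ν) ≤ κ₂(ν) for every normal direction ν ∈ S¹:
    (hcurv : ∀ θ, h₂ θ + deriv (deriv h₂) θ ≤ h₁ θ + deriv (deriv h₁) θ)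
    -- D₁ and D₂ touch at p with coinciding inward normals:
    (p : ℝ × ℝ) (θ₀ : ℝ)
    (htouch₁ : boundaryPoint h₁ θ₀ = p) (htouch₂ : boundaryPoint h₂ θ₀ = p) :
    supportDomain h₂ ⊆ supportDomain h₁ := by
  have hd₁ : Differentiable ℝ h₁ := hsm₁.differentiable (by norm_num)
  have hd₂ : Differentiable ℝ h₂ := hsm₂.differentiable (by norm_num)
  have hdd₁ : Differentiable ℝ (deriv h₁) :=
    ((contDiff_succ_iff_deriv (n := 1)).mp (by exact_mod_cast hsm₁)).2.2.differentiable (by norm_num)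
  have hdd₂ : Differentiable ℝ (deriv h₂) :=
    ((contDiff_succ_iff_deriv (n := 1)).mp (by exact_mod_cast hsm₂)).2.2.differentiable (by norm_num)
  set g : ℝ → ℝ := fun θ => h₁ θ - h₂ θ with hgdef
  have hgsm : ContDiff ℝ 2 g := hsm₁.sub hsm₂
  have hgd : deriv g = fun θ => deriv h₁ θ - deriv h₂ θ := by
    funext θ; exact deriv_sub (hd₁ θ) (hd₂ θ)
  have hgdd : deriv (deriv g) = fun θ => deriv (deriv h₁) θ - deriv (deriv h₂) θ := by
    funext θ; rw [hgd]; exact deriv_sub (hdd₁ θ) (hdd₂ θ)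
  -- touching: h₁ θ₀ = h₂ θ₀ and h₁' θ₀ = h₂' θ₀
  have htch : boundaryPoint h₁ θ₀ = boundaryPoint h₂ θ₀ := htouch₁.trans htouch₂.symm
  have h1 : h₁ θ₀ * Real.cos θ₀ - deriv h₁ θ₀ * Real.sin θ₀
      = h₂ θ₀ * Real.cos θ₀ - deriv h₂ θ₀ * Real.sin θ₀ := congrArg Prod.fst htch
  have h2 : h₁ θ₀ * Real.sin θ₀ + deriv h₁ θ₀ * Real.cos θ₀
      = h₂ θ₀ * Real.sin θ₀ + deriv h₂ θ₀ * Real.cos θ₀ := congrArg Prod.snd htch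
  have hsc : Real.sin θ₀ ^ 2 + Real.cos θ₀ ^ 2 = 1 := Real.sin_sq_add_cos_sq θ₀
  have heq0 : h₁ θ₀ = h₂ θ₀ := by
    linear_combination Real.cos θ₀ * h1 + Real.sin θ₀ * h2 - (h₁ θ₀ - h₂ θ₀) * hsc
  have heq0' : deriv h₁ θ₀ = deriv h₂ θ₀ := by
    linear_combination (-Real.sin θ₀) * h1 + Real.cos θ₀ * h2
      - (deriv h₁ θ₀ - deriv h₂ θ₀) * hsc
  have key : ∀ θ, 0 ≤ g θ := by
    apply key_nonneg g hgsm (hper₁.sub hper₂) θ₀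
    · simp [hgdef, heq0]
    · rw [hgd]; simp [heq0']
    · intro θ; rw [hgdd]; have := hcurv θ; simp only [hgdef]; linarith
  intro y hy θ
  have hk : 0 ≤ h₁ θ - h₂ θ := key θ
  exact le_trans (hy θ) (by linarith)
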